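/- Let n ≥ 2 and let F = {⟨B_1,S_1⟩, …, ⟨B_m,S_m⟩} be a quantum probability assignment on ℂⁿ. Then F is consistent if and only if every subset G ⊆ F of size at most n² − n + 2 is consistent. -/

import Mathlib

open Matrix ComplexOrder

/-- The rank-one orthogonal projection `|v⟩⟨v|` onto the line spanned by `v`. -/
def proj {n : ℕ} (v : Fin n → ℂ) : Matrix (Fin n) (Fin n) ℂ :=
  Matrix.vecMulVec v (star v)

/-- One member `⟨B_k, S_k⟩` of a quantum probability assignment on `ℂⁿ`: an
orthonormal basis `vec` of `ℂⁿ` (whose rank-one projections form the measurement)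
together with a probability distribution `prob` on the `n` outcomes. -/
structure Meas (n : ℕ) where
  vec : Fin n → (Fin n → ℂ)
  ortho : ∀ i j, dotProduct (star (vec i)) (vec j) = if i = j then 1 else 0
  prob : Fin n → ℝ
  prob_nonneg : ∀ i, 0 ≤ prob i
  prob_sum : ∑ i, prob i = 1

/-- The sub-family of the QPA `F` indexed by `G` is consistent: some density matrix
(positive semidefinite, trace one) reproduces all the assigned probabilities. -/
def ConsistentOn {n m : ℕ} (F : Fin m → Meas n) (G : Finset (Fin m)) : Prop :=
  ∃ ρ : Matrix (Fin n) (Fin n) ℂ, ρ.PosSemidef ∧ ρ.trace = 1 ∧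
    ∀ k ∈ G, ∀ i, (ρ * proj ((F k).vec i)).trace = ((F k).prob i : ℂ)

namespace QPAaux

variable {n : ℕ}

abbrev Mx (n : ℕ) := Matrix (Fin n) (Fin n) ℂ

lemma trace_mul_proj (M : Mx n) (v : Fin n → ℂ) :
    (M * proj v).trace = dotProduct (star v) (M *ᵥ v) := by
  simp only [Matrix.trace, Matrix.diag, Matrix.mul_apply, proj, vecMulVec_apply,
    dotProduct, Matrix.mulVec, Pi.star_apply, Finset.mul_sum]
  congr 1; ext i; congr 1; ext j; ring

lemma proj_conjTranspose (v : Fin n → ℂ) : (proj v)ᴴ = proj v := by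
  ext i j
  simp [proj, Matrix.conjTranspose_apply, vecMulVec_apply, mul_comm]

lemma mulVec_proj (v w : Fin n → ℂ) :
    proj w *ᵥ v = dotProduct (star w) v • w := by
  ext i
  simp [proj, Matrix.mulVec, dotProduct, vecMulVec_apply, Finset.mul_sum, Finset.sum_mul]
  congr 1; ext j; ring

lemma trace_proj_mul_proj (w v : Fin n → ℂ) :
    (proj w * proj v).trace
      = dotProduct (star w) v * dotProduct (star v) w := by
  rw [trace_mul_proj, mulVec_proj]
  simp only [dotProduct_smul, smul_eq_mul]
  try ring

lemma trace_proj (v : Fin n → ℂ) :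
    (proj v).trace = dotProduct (star v) v := by
  simp [proj, Matrix.trace, Matrix.diag, vecMulVec_apply, dotProduct, mul_comm]

lemma psd_zero : (0 : Mx n).PosSemidef := by
  constructor
  · simp [Matrix.IsHermitian]
  · intro x; simp

lemma psd_add {M N : Mx n} (hM : M.PosSemidef) (hN : N.PosSemidef) :
    (M + N).PosSemidef := by
  refine .of_dotProduct_mulVec_nonneg (hM.1.add hN.1) fun x => ?_
  rw [Matrix.add_mulVec, dotProduct_add]
  exact add_nonneg (hM.dotProduct_mulVec_nonneg x) (hN.dotProduct_mulVec_nonneg x)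

lemma psd_smul {M : Mx n} (hM : M.PosSemidef) {c : ℝ} (hc : 0 ≤ c) :
    ((c : ℂ) • M).PosSemidef := by
  refine .of_dotProduct_mulVec_nonneg ?_ fun x => ?_
  · unfold Matrix.IsHermitian
    rw [Matrix.conjTranspose_smul, hM.1]
    congr 1
    simp
  · rw [Matrix.smul_mulVec, dotProduct_smul, smul_eq_mul]
    exact mul_nonneg (by exact_mod_cast hc) (hM.dotProduct_mulVec_nonneg x)

lemma psd_proj (v : Fin n → ℂ) : (proj v).PosSemidef := by
  refine .of_dotProduct_mulVec_nonneg (proj_conjTranspose v) fun x => ?_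
  rw [mulVec_proj, dotProduct_smul, smul_eq_mul]
  have h : dotProduct (star x) v = star (dotProduct (star v) x) := by
    simp [dotProduct, mul_comm]
  rw [mul_comm, h]
  exact star_mul_self_nonneg _

lemma trace_projs (μ : Meas n) (i j : Fin n) :
    (proj (μ.vec i) * proj (μ.vec j)).trace = if i = j then 1 else 0 := by
  rw [trace_proj_mul_proj, μ.ortho i j, μ.ortho j i]
  by_cases h : i = j <;> simp [h]

/-- The canonical density matrix reproducing the probabilities of one measurement. -/
noncomputable def rho0 (μ : Meas n) : Mx n :=
  ∑ i, ((μ.prob i : ℂ)) • proj (μ.vec i)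

lemma rho0_psd (μ : Meas n) : (rho0 μ).PosSemidef := by
  refine Finset.sum_induction _ _ (fun a b ha hb => psd_add ha hb) psd_zero ?_
  exact fun i _ => psd_smul (psd_proj _) (μ.prob_nonneg i)

lemma rho0_trace (μ : Meas n) : (rho0 μ).trace = 1 := by
  rw [rho0, Matrix.trace_sum]
  have : ∀ i, (((μ.prob i : ℂ)) • proj (μ.vec i)).trace = (μ.prob i : ℂ) := by
    intro i
    rw [Matrix.trace_smul, trace_proj, μ.ortho i i]
    simp
  simp only [this]
  rw [← Complex.ofReal_sum, μ.prob_sum, Complex.ofReal_one]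

lemma rho0_constraint (μ : Meas n) (j : Fin n) :
    ((rho0 μ) * proj (μ.vec j)).trace = (μ.prob j : ℂ) := by
  rw [rho0, Matrix.sum_mul, Matrix.trace_sum]
  have : ∀ i, ((((μ.prob i : ℂ)) • proj (μ.vec i)) * proj (μ.vec j)).trace
      = (μ.prob i : ℂ) * (if i = j then 1 else 0) := by
    intro i
    rw [Matrix.smul_mul, Matrix.trace_smul, trace_projs, smul_eq_mul]
  simp only [this, mul_ite, mul_one, mul_zero, Finset.sum_ite_eq', Finset.mem_univ, if_true]

lemma rho0_conjTranspose (μ : Meas n) : (rho0 μ)ᴴ = rho0 μ := (rho0_psd μ).1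

/-- Real scalar multiplication on complex matrices agrees with multiplication by the
complex coercion. -/
lemma real_smul_mx (a : ℝ) (M : Mx n) : a • M = ((a : ℂ)) • M := by
  ext i j
  simp [Complex.real_smul]

/-- self-adjoint and skew-adjoint complex matrices are isomorphic real vector spaces. -/
noncomputable def saEquivSkew (n : ℕ) :
    ↥(selfAdjoint (Mx n)) ≃ₗ[ℝ] ↥(skewAdjoint (Mx n)) where
  toFun A := ⟨Complex.I • (A : Mx n), by
    rw [skewAdjoint.mem_iff, star_smul, A.2.star_eq]
    simp⟩
  invFun B := ⟨-(Complex.I • (B : Mx n)), by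
    rw [selfAdjoint.mem_iff, star_neg, star_smul, skewAdjoint.mem_iff.mp B.2]
    simp⟩
  left_inv A := by
    ext i j
    simp [smul_smul, Complex.I_mul_I]
  right_inv B := by
    ext i j
    simp only [smul_smul, AddSubgroup.coe_mk, Matrix.smul_apply, Matrix.neg_apply,
      smul_eq_mul]
    rw [mul_neg, ← mul_assoc, Complex.I_mul_I]
    ring
  map_add' A B := by
    ext i j
    simp
    ring
  map_smul' r A := by
    ext i j
    simp [selfAdjoint.val_smul, skewAdjoint.val_smul, smul_comm]
    ring

noncomputable def saval (n : ℕ) : ↥(selfAdjoint (Mx n)) →ₗ[ℝ] Mx n where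
  toFun A := A
  map_add' _ _ := rfl
  map_smul' _ _ := rfl

instance : FiniteDimensional ℝ ↥(selfAdjoint (Mx n)) :=
  Module.Finite.of_injective (saval n) Subtype.val_injective

lemma finrank_selfAdjoint_matrix (n : ℕ) :
    Module.finrank ℝ ↥(selfAdjoint (Mx n)) = n ^ 2 := by
  have e1 := StarModule.decomposeProdAdjoint ℝ (Mx n)
  have hfd : FiniteDimensional ℝ (↥(selfAdjoint (Mx n)) × ↥(skewAdjoint (Mx n))) :=
    Module.Finite.equiv e1
  have hfd2 : FiniteDimensional ℝ ↥(skewAdjoint (Mx n)) :=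
    Module.Finite.of_injective (LinearMap.inr ℝ ↥(selfAdjoint (Mx n)) _) LinearMap.inr_injective
  have h1 : Module.finrank ℝ (Mx n)
      = Module.finrank ℝ ↥(selfAdjoint (Mx n)) + Module.finrank ℝ ↥(skewAdjoint (Mx n)) := by
    rw [e1.finrank_eq, Module.finrank_prod]
  have h2 : Module.finrank ℝ ↥(skewAdjoint (Mx n)) = Module.finrank ℝ ↥(selfAdjoint (Mx n)) :=
    ((saEquivSkew n).finrank_eq).symm
  have h3 : Module.finrank ℝ (Mx n) = n * n * 2 := by
    rw [Module.finrank_matrix, Complex.finrank_real_complex]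
    simp
  rw [h2, h3] at h1
  nlinarith [h1]

/-- The linear functional recording the (real) traces against the projections of a
fixed measurement. -/
noncomputable def phi (μ : Meas n) : ↥(selfAdjoint (Mx n)) →ₗ[ℝ] (Fin n → ℝ) where
  toFun A := fun i => ((A : Mx n) * proj (μ.vec i)).trace.re
  map_add' A B := by
    funext i
    simp [Matrix.add_mul, Matrix.trace_add]
  map_smul' r A := by
    funext i
    simp [selfAdjoint.val_smul, Matrix.smul_mul, Matrix.trace_smul, Complex.real_smul]

lemma phi_surjective (μ : Meas n) : Function.Surjective (phi μ) := by
  intro c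
  have hmem : (∑ j, ((c j : ℂ)) • proj (μ.vec j)) ∈ selfAdjoint (Mx n) := by
    rw [selfAdjoint.mem_iff]
    show (∑ j, ((c j : ℂ)) • proj (μ.vec j))ᴴ = _
    rw [Matrix.conjTranspose_sum]
    congr 1
    funext j
    rw [Matrix.conjTranspose_smul, proj_conjTranspose]
    congr 1
    simp
  refine ⟨⟨_, hmem⟩, ?_⟩
  funext i
  show ((∑ j, ((c j : ℂ)) • proj (μ.vec j)) * proj (μ.vec i)).trace.re = c i
  rw [Matrix.sum_mul, Matrix.trace_sum]
  have : ∀ j, ((((c j : ℂ)) • proj (μ.vec j)) * proj (μ.vec i)).trace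
      = (c j : ℂ) * (if j = i then 1 else 0) := by
    intro j
    rw [Matrix.smul_mul, Matrix.trace_smul, trace_projs, smul_eq_mul]
  simp only [this, mul_ite, mul_one, mul_zero, Finset.sum_ite_eq', Finset.mem_univ, if_true]
  simp

lemma finrank_ker_phi (μ : Meas n) :
    Module.finrank ℝ ↥(LinearMap.ker (phi μ)) = n ^ 2 - n := by
  have h := LinearMap.finrank_range_add_finrank_ker (phi μ)
  rw [LinearMap.range_eq_top.mpr (phi_surjective μ)] at h
  rw [finrank_top, finrank_selfAdjoint_matrix] at h
  have hn : Module.finrank ℝ (Fin n → ℝ) = n := by simp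
  rw [hn] at h
  omega

end QPAaux

open QPAaux in
/-- For `n ≥ 2`, a quantum probability assignment `F` on `ℂⁿ` is consistent iff every
subset of `F` of size at most `n² − n + 2` is consistent. -/
theorem consistency_of_subsets_weak {n m : ℕ} (hn : 2 ≤ n) (F : Fin m → Meas n) :
    ConsistentOn F Finset.univ ↔
      ∀ G : Finset (Fin m), G.card ≤ n ^ 2 - n + 2 → ConsistentOn F G := by
  classical
  constructor
  · rintro ⟨ρ, h1, h2, h3⟩ G _
    exact ⟨ρ, h1, h2, fun k _ i => h3 k (Finset.mem_univ k) i⟩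
  · intro h
    by_cases hm : m ≤ n ^ 2 - n + 2
    · exact h Finset.univ (by simpa using hm)
    push_neg at hm
    have hm0 : 0 < m := by omega
    set k0 : Fin m := ⟨0, hm0⟩ with hk0
    set μ0 : Meas n := F k0 with hμ0
    set K := LinearMap.ker (phi μ0) with hK
    -- the convex sets, living inside the real vector space `K`
    set Good : Fin m → Mx n → Prop := fun k σ =>
      σ.PosSemidef ∧ σ.trace = 1 ∧
        ∀ i, (σ * proj ((F k).vec i)).trace = ((F k).prob i : ℂ) with hGood
    set D : Fin m → Set ↥K := fun k =>
      {x | Good k (rho0 μ0 + ((x : ↥(selfAdjoint (Mx n))) : Mx n))} with hD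
    have hval : ∀ (a : ℝ) (x : ↥K),
        (((a • x : ↥K) : ↥(selfAdjoint (Mx n))) : Mx n)
          = (a : ℂ) • ((x : ↥(selfAdjoint (Mx n))) : Mx n) := by
      intro a x
      rw [← real_smul_mx]
      rfl
    have hconv : ∀ k ∈ (Finset.univ : Finset (Fin m)), Convex ℝ (D k) := by
      intro k _
      intro x hx y hy a b ha hb hab
      have hab' : (a : ℂ) + (b : ℂ) = 1 := by exact_mod_cast hab
      set X := ((x : ↥(selfAdjoint (Mx n))) : Mx n) with hX
      set Y := ((y : ↥(selfAdjoint (Mx n))) : Mx n) with hY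
      have hsum : (((a • x + b • y : ↥K) : ↥(selfAdjoint (Mx n))) : Mx n)
          = (a : ℂ) • X + (b : ℂ) • Y := by
        have : ((a • x + b • y : ↥K) : ↥(selfAdjoint (Mx n)))
            = (a • x : ↥K) + (b • y : ↥K) := rfl
        rw [this]
        show ((((a • x : ↥K) : ↥(selfAdjoint (Mx n)))) : Mx n)
            + ((((b • y : ↥K) : ↥(selfAdjoint (Mx n)))) : Mx n) = _
        rw [hval, hval]
      have hT : rho0 μ0 + (((a • x + b • y : ↥K) : ↥(selfAdjoint (Mx n))) : Mx n)
          = (a : ℂ) • (rho0 μ0 + X) + (b : ℂ) • (rho0 μ0 + Y) := by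
        rw [hsum, smul_add, smul_add, add_add_add_comm, ← add_smul, hab', one_smul]
      show Good k _
      rw [hD] at hx hy
      obtain ⟨hx1, hx2, hx3⟩ := hx
      obtain ⟨hy1, hy2, hy3⟩ := hy
      refine ⟨?_, ?_, ?_⟩
      · rw [hT]
        exact psd_add (psd_smul hx1 ha) (psd_smul hy1 hb)
      · rw [hT, Matrix.trace_add, Matrix.trace_smul, Matrix.trace_smul, hx2, hy2]
        simpa using hab'
      · intro i
        rw [hT, Matrix.add_mul, Matrix.smul_mul, Matrix.smul_mul, Matrix.trace_add,
          Matrix.trace_smul, Matrix.trace_smul, hx3 i, hy3 i, smul_eq_mul, smul_eq_mul,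
          ← add_mul, hab', one_mul]
    have hinter : ∀ I ⊆ (Finset.univ : Finset (Fin m)),
        I.card ≤ Module.finrank ℝ ↥K + 1 → (⋂ i ∈ I, D i).Nonempty := by
      intro I _ hIcard
      rw [hK, finrank_ker_phi] at hIcard
      set G : Finset (Fin m) := insert k0 I with hG
      have hGcard : G.card ≤ n ^ 2 - n + 2 := by
        rw [hG]
        have := Finset.card_insert_le k0 I
        omega
      obtain ⟨ρ, hpsd, htr, hcon⟩ := h G hGcard
      have hXsa : ρ - rho0 μ0 ∈ selfAdjoint (Mx n) := by
        rw [selfAdjoint.mem_iff]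
        show (ρ - rho0 μ0)ᴴ = ρ - rho0 μ0
        rw [Matrix.conjTranspose_sub, hpsd.1, rho0_conjTranspose]
      have hXker : (⟨ρ - rho0 μ0, hXsa⟩ : ↥(selfAdjoint (Mx n))) ∈ K := by
        rw [hK, LinearMap.mem_ker]
        funext i
        show ((ρ - rho0 μ0) * proj (μ0.vec i)).trace.re = 0
        rw [Matrix.sub_mul, Matrix.trace_sub, rho0_constraint,
          hcon k0 (Finset.mem_insert_self k0 I) i]
        simp
        exact sub_self _
      refine ⟨⟨⟨ρ - rho0 μ0, hXsa⟩, hXker⟩, ?_⟩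
      rw [Set.mem_iInter₂]
      intro k hk
      show Good k (rho0 μ0 + (ρ - rho0 μ0))
      rw [add_sub_cancel]
      exact ⟨hpsd, htr, fun i => hcon k (Finset.mem_insert_of_mem hk) i⟩
    obtain ⟨x, hx⟩ := Convex.helly_theorem' (𝕜 := ℝ) (E := ↥K)
      (F := D) (s := Finset.univ) hconv hinter
    rw [Set.mem_iInter₂] at hx
    have hGoodAll : ∀ k : Fin m, Good k (rho0 μ0 + ((x : ↥(selfAdjoint (Mx n))) : Mx n)) :=
      fun k => hx k (Finset.mem_univ k)
    exact ⟨rho0 μ0 + ((x : ↥(selfAdjoint (Mx n))) : Mx n), (hGoodAll k0).1,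
      (hGoodAll k0).2.1, fun k _ i => (hGoodAll k).2.2 i⟩
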